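/- If a function x(t) satisfies the Riccati differential equation x'(t) = a(x - α)(x - β) with a ≠ 0, then for every n ≥ 2 the n-th derivative satisfies x^{(n)}(t) = a^n · Σ_{k=0}^{n-1} ⟨n, k⟩ · (x-α)^{k+1} · (x-β)^{n-k}, where ⟨n,k⟩ denotes the Eulerian number. -/

import Mathlib

/-- Eulerian numbers `⟨n, k⟩`: the number of permutations of `{1, ..., n}` with
exactly `k` ascents, via the standard recurrence. -/
def eulerian : ℕ → ℕ → ℕ
  | 0, 0 => 1
  | 0, _ + 1 => 0
  | _ + 1, 0 => 1
  | n + 1, k + 1 => (k + 2) * eulerian n (k + 1) + (n - k) * eulerian n k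

lemma eulerian_zero_right (n : ℕ) : eulerian n 0 = 1 := by
  cases n <;> rfl

lemma eulerian_eq_zero : ∀ n k : ℕ, 1 ≤ n → n ≤ k → eulerian n k = 0
  | n + 1, k + 1, _, h => by
    simp only [eulerian]
    have hnk : n - k = 0 := by omega
    rcases Nat.eq_zero_or_pos n with h0 | h1
    · subst h0; simp [eulerian, hnk]
    · rw [eulerian_eq_zero n (k + 1) h1 (by omega), hnk]; ring

lemma sum_step (m : ℕ) (u v : ℂ) :
    ∑ k ∈ Finset.range (m + 1), (eulerian (m + 1) k : ℂ) *
      (((k + 1 : ℕ) : ℂ) * u ^ (k + 1) * v ^ (m + 1 - k + 1)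
        + ((m + 1 - k : ℕ) : ℂ) * u ^ (k + 2) * v ^ (m + 1 - k)) =
    ∑ k ∈ Finset.range (m + 2), (eulerian (m + 2) k : ℂ) * u ^ (k + 1) * v ^ (m + 2 - k) := by
  have hz : (eulerian (m + 1) (m + 1) : ℂ) = 0 := by
    rw [eulerian_eq_zero (m + 1) (m + 1) (by omega) le_rfl]; simp
  set A : ℂ := ∑ k ∈ Finset.range m,
    ((k + 2 : ℕ) : ℂ) * (eulerian (m + 1) (k + 1) : ℂ) * u ^ (k + 2) * v ^ (m + 1 - k) with hA
  set B : ℂ := ∑ k ∈ Finset.range (m + 1),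
    ((m + 1 - k : ℕ) : ℂ) * (eulerian (m + 1) k : ℂ) * u ^ (k + 2) * v ^ (m + 1 - k) with hB
  have hL : ∑ k ∈ Finset.range (m + 1), (eulerian (m + 1) k : ℂ) *
      (((k + 1 : ℕ) : ℂ) * u ^ (k + 1) * v ^ (m + 1 - k + 1)
        + ((m + 1 - k : ℕ) : ℂ) * u ^ (k + 2) * v ^ (m + 1 - k))
      = (A + u * v ^ (m + 2)) + B := by
    have hsplit : ∀ k ∈ Finset.range (m + 1), (eulerian (m + 1) k : ℂ) *
        (((k + 1 : ℕ) : ℂ) * u ^ (k + 1) * v ^ (m + 1 - k + 1)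
          + ((m + 1 - k : ℕ) : ℂ) * u ^ (k + 2) * v ^ (m + 1 - k))
        = ((k + 1 : ℕ) : ℂ) * (eulerian (m + 1) k : ℂ) * u ^ (k + 1) * v ^ (m + 1 - k + 1)
          + ((m + 1 - k : ℕ) : ℂ) * (eulerian (m + 1) k : ℂ) * u ^ (k + 2) * v ^ (m + 1 - k) := by
      intro k _; ring
    rw [Finset.sum_congr rfl hsplit, Finset.sum_add_distrib]
    rw [hB]
    congr 1
    rw [Finset.sum_range_succ']
    congr 1
    · rw [hA]
      apply Finset.sum_congr rfl
      intro k hk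
      have hk' : k < m := Finset.mem_range.mp hk
      have he : m + 1 - (k + 1) + 1 = m + 1 - k := by omega
      rw [he]
    · rw [eulerian_zero_right]
      push_cast
      ring
  have hR : ∑ k ∈ Finset.range (m + 2), (eulerian (m + 2) k : ℂ) * u ^ (k + 1) * v ^ (m + 2 - k)
      = (A + B) + u * v ^ (m + 2) := by
    rw [Finset.sum_range_succ']
    congr 1
    · have hsplit : ∀ k ∈ Finset.range (m + 1),
          (eulerian (m + 2) (k + 1) : ℂ) * u ^ (k + 1 + 1) * v ^ (m + 2 - (k + 1))
          = ((k + 2 : ℕ) : ℂ) * (eulerian (m + 1) (k + 1) : ℂ) * u ^ (k + 2) * v ^ (m + 1 - k)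
            + ((m + 1 - k : ℕ) : ℂ) * (eulerian (m + 1) k : ℂ) * u ^ (k + 2) * v ^ (m + 1 - k) := by
        intro k hk
        have he : m + 2 - (k + 1) = m + 1 - k := by omega
        have he2 : m + 1 - k = m - k + 1 := by
          have := Finset.mem_range.mp hk; omega
        rw [he]
        simp only [eulerian]
        push_cast [he2]
        ring
      rw [Finset.sum_congr rfl hsplit, Finset.sum_add_distrib, hA, hB]
      congr 1
      rw [Finset.sum_range_succ, hz]
      simp only [mul_zero, zero_mul, add_zero]
    · rw [eulerian_zero_right]
      push_cast
      ring
  rw [hL, hR]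
  ring

theorem stmt_9 (a α β : ℂ) (ha : a ≠ 0) (x : ℝ → ℂ)
    (hx : ∀ t : ℝ, HasDerivAt x (a * (x t - α) * (x t - β)) t) :
    ∀ n : ℕ, 2 ≤ n → ∀ t : ℝ,
      iteratedDeriv n x t =
        a ^ n * ∑ k ∈ Finset.range n,
          (eulerian n k : ℂ) * (x t - α) ^ (k + 1) * (x t - β) ^ (n - k) := by
  have key : ∀ n : ℕ, 1 ≤ n → ∀ t : ℝ,
      iteratedDeriv n x t =
        a ^ n * ∑ k ∈ Finset.range n,
          (eulerian n k : ℂ) * (x t - α) ^ (k + 1) * (x t - β) ^ (n - k) := by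
    intro n hn
    induction n, hn using Nat.le_induction with
    | base =>
      intro t
      rw [iteratedDeriv_one, (hx t).deriv]
      simp [eulerian_zero_right]
      ring
    | succ n hn ih =>
      intro t
      have hF : HasDerivAt (fun s => a ^ n * ∑ k ∈ Finset.range n,
          (eulerian n k : ℂ) * (x s - α) ^ (k + 1) * (x s - β) ^ (n - k))
          (a ^ n * ∑ k ∈ Finset.range n, (eulerian n k : ℂ) *
            ((((k + 1 : ℕ) : ℂ) * (x t - α) ^ k * (a * (x t - α) * (x t - β))) * (x t - β) ^ (n - k)
              + (x t - α) ^ (k + 1) * (((n - k : ℕ) : ℂ) * (x t - β) ^ (n - k - 1)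
                  * (a * (x t - α) * (x t - β))))) t := by
        apply HasDerivAt.const_mul
        apply HasDerivAt.fun_sum
        intro k hk
        have h1 : HasDerivAt (fun s : ℝ => (x s - α) ^ (k + 1))
            (((k + 1 : ℕ) : ℂ) * (x t - α) ^ k * (a * (x t - α) * (x t - β))) t := by
          have := (hasDerivAt_pow (k + 1) (x t - α)).comp t ((hx t).sub_const α)
          simpa [Function.comp_def, mul_assoc] using this
        have h2 : HasDerivAt (fun s : ℝ => (x s - β) ^ (n - k))
            (((n - k : ℕ) : ℂ) * (x t - β) ^ (n - k - 1) * (a * (x t - α) * (x t - β))) t := by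
          have := (hasDerivAt_pow (n - k) (x t - β)).comp t ((hx t).sub_const β)
          simpa [Function.comp_def, mul_assoc] using this
        exact ((h1.const_mul ((eulerian n k : ℂ))).mul h2).congr_deriv (by ring)
      rw [iteratedDeriv_succ]
      have heq : iteratedDeriv n x = fun s => a ^ n * ∑ k ∈ Finset.range n,
          (eulerian n k : ℂ) * (x s - α) ^ (k + 1) * (x s - β) ^ (n - k) := funext ih
      rw [heq, hF.deriv]
      have hterm : ∀ k ∈ Finset.range n,
          (eulerian n k : ℂ) *
            ((((k + 1 : ℕ) : ℂ) * (x t - α) ^ k * (a * (x t - α) * (x t - β))) * (x t - β) ^ (n - k)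
              + (x t - α) ^ (k + 1) * (((n - k : ℕ) : ℂ) * (x t - β) ^ (n - k - 1)
                  * (a * (x t - α) * (x t - β))))
          = a * ((eulerian n k : ℂ) *
              (((k + 1 : ℕ) : ℂ) * (x t - α) ^ (k + 1) * (x t - β) ^ (n - k + 1)
                + ((n - k : ℕ) : ℂ) * (x t - α) ^ (k + 2) * (x t - β) ^ (n - k))) := by
        intro k hk
        have hk' : k < n := Finset.mem_range.mp hk
        have he : n - k - 1 + 1 = n - k := by omega
        rw [← he]
        push_cast
        ring
      rw [Finset.sum_congr rfl hterm, ← Finset.mul_sum]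
      obtain ⟨m, rfl⟩ : ∃ m, n = m + 1 := ⟨n - 1, by omega⟩
      rw [sum_step m (x t - α) (x t - β)]
      ring
  intro n hn t
  exact key n (by omega) t
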